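/- Let φ : M → S^n be a smooth map in the equator coordinates as above, with f = φ^n − π/2. Then on any open set D whose closure is compact and contained in the chart domain, for 0 ≤ j ≤ k−3 there exists a constant C > 0 such that |dA^n_{j+1}| ≤ C( |f| + |df| + |∇df| ). -/

import Mathlib

noncomputable section

open scoped BigOperators

namespace Polyharm

/-- Partial derivative of a scalar function on `ℝ^d` in the `i`-th coordinate direction. -/
def pd {d : ℕ} (i : Fin d) (f : (Fin d → ℝ) → ℝ) (x : Fin d → ℝ) : ℝ :=
  fderiv ℝ f x (Pi.single i 1)

/-- Euclidean norm of a finite family of real numbers. -/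
def vnorm {ι : Type} [Fintype ι] (f : ι → ℝ) : ℝ :=
  Real.sqrt (∑ i, f i ^ 2)

/-- Local-coordinate data for maps between Riemannian manifolds: the inverse metric
`g^{ij}` and the Christoffel symbols `Γ^k_{ij}` of a chart of the domain `(M,g)`, and
the Christoffel symbols `Γ^α_{βγ}` of a chart of the target `(N,h)`. -/
structure ChartData (m n : ℕ) where
  ginv : (Fin m → ℝ) → Fin m → Fin m → ℝ
  ΓM : (Fin m → ℝ) → Fin m → Fin m → Fin m → ℝ
  ΓN : (Fin n → ℝ) → Fin n → Fin n → Fin n → ℝ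

variable {m n : ℕ}

/-- Smoothness of the domain data. -/
def ChartData.SmoothDomain (P : ChartData m n) : Prop :=
  (∀ i j, ContDiff ℝ (⊤ : ℕ∞) fun x => P.ginv x i j) ∧
  (∀ k i j, ContDiff ℝ (⊤ : ℕ∞) fun x => P.ΓM x k i j)

/-- Smoothness of the target Christoffel symbols. -/
def ChartData.SmoothTarget (P : ChartData m n) : Prop :=
  ∀ α β γ, ContDiff ℝ (⊤ : ℕ∞) fun y => P.ΓN y α β γ

/-- The chart data comes from Riemannian metrics: `g^{ij}` is symmetric and positive
definite, and the Christoffel symbols are symmetric in their lower indices. -/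
def ChartData.Riemannian (P : ChartData m n) : Prop :=
  (∀ x i j, P.ginv x i j = P.ginv x j i) ∧
  (∀ x (v : Fin m → ℝ), v ≠ 0 → 0 < ∑ i, ∑ j, P.ginv x i j * v i * v j) ∧
  (∀ x k i j, P.ΓM x k i j = P.ΓM x k j i) ∧
  (∀ y α β γ, P.ΓN y α β γ = P.ΓN y α γ β)

/-- The Laplace–Beltrami operator on scalar functions:
`-Δ f = g^{ij} ∂²f/∂x^i∂x^j - g^{ij} Γ^k_{ij} ∂f/∂x^k`. -/
def lap (P : ChartData m n) (f : (Fin m → ℝ) → ℝ) (x : Fin m → ℝ) : ℝ :=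
  -((∑ i, ∑ j, P.ginv x i j * pd i (fun z => pd j f z) x)
    - ∑ i, ∑ j, ∑ k, P.ginv x i j * P.ΓM x k i j * pd k f x)

/-- `φ_i^β = ∂φ^β/∂x^i`. -/
def dphi (φ : (Fin m → ℝ) → Fin n → ℝ) (x : Fin m → ℝ) (i : Fin m) (β : Fin n) : ℝ :=
  pd i (fun z => φ z β) x

/-- `⟨dφ^β, dψ^γ⟩ = g^{ij} φ_i^β ψ_j^γ`. -/
def dpair (P : ChartData m n) (φ ψ : (Fin m → ℝ) → Fin n → ℝ) (x : Fin m → ℝ)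
    (β γ : Fin n) : ℝ :=
  ∑ i, ∑ j, P.ginv x i j * dphi φ x i β * dphi ψ x j γ

/-- Components `R^α_{δβγ}` of the curvature tensor of the target, with the sign
convention `R(∂/∂y^β, ∂/∂y^γ)∂/∂y^δ = R^α_{δβγ} ∂/∂y^α` of the paper. -/
def Rc (P : ChartData m n) (y : Fin n → ℝ) (α δ β γ : Fin n) : ℝ :=
  pd β (fun z => P.ΓN z α γ δ) y - pd γ (fun z => P.ΓN z α β δ) y
    + ∑ μ, (P.ΓN y α β μ * P.ΓN y μ γ δ - P.ΓN y α γ μ * P.ΓN y μ β δ)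

/-- `2S^α_{βωϑ} = ∂Γ^α_{βϑ}/∂y^ω + Γ^γ_{βϑ}Γ^α_{ωγ} + ∂Γ^α_{ωϑ}/∂y^β + Γ^γ_{ωϑ}Γ^α_{βγ}`. -/
def Scoef (P : ChartData m n) (y : Fin n → ℝ) (α β ω ϑ : Fin n) : ℝ :=
  (pd ω (fun z => P.ΓN z α β ϑ) y + (∑ γ, P.ΓN y γ β ϑ * P.ΓN y α ω γ)
    + pd β (fun z => P.ΓN z α ω ϑ) y + ∑ γ, P.ΓN y γ ω ϑ * P.ΓN y α β γ) / 2

/-- The operator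
`A^α(η,ξ) = ξ_i^ϑ(-2 g^{ij} φ_j^β Γ^α_{βϑ}) + η^ϑ((Δφ^β)Γ^α_{βϑ} - g^{ij} φ_j^β φ_i^ω S^α_{βωϑ})`. -/
def Aop (P : ChartData m n) (φ : (Fin m → ℝ) → Fin n → ℝ) (η : Fin n → ℝ)
    (ξ : Fin m → Fin n → ℝ) (x : Fin m → ℝ) (α : Fin n) : ℝ :=
  (∑ ϑ, ∑ i, ξ i ϑ * (-2 * ∑ j, ∑ β, P.ginv x i j * dphi φ x j β * P.ΓN (φ x) α β ϑ))
    + ∑ ϑ, η ϑ * ((∑ β, lap P (fun z => φ z β) x * P.ΓN (φ x) α β ϑ)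
        - ∑ i, ∑ j, ∑ β, ∑ ω,
            P.ginv x i j * dphi φ x j β * dphi φ x i ω * Scoef P (φ x) α β ω ϑ)

/-- The operator `A` applied to (the components of) a section `σ` of `φ⁻¹TN`:
`A(σ, ∂σ)`. -/
def Asec (P : ChartData m n) (φ σ : (Fin m → ℝ) → Fin n → ℝ) (x : Fin m → ℝ)
    (α : Fin n) : ℝ :=
  Aop P φ (σ x) (fun i ϑ => pd i (fun z => σ z ϑ) x) x α

/-- Components of the tension field `τ^α(φ) = -Δφ^α + g^{ij} Γ^α_{ϑβ} φ_i^ϑ φ_j^β`. -/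
def tension (P : ChartData m n) (φ : (Fin m → ℝ) → Fin n → ℝ) (x : Fin m → ℝ)
    (α : Fin n) : ℝ :=
  -(lap P (fun z => φ z α) x)
    + ∑ i, ∑ j, ∑ ϑ, ∑ β,
        P.ginv x i j * P.ΓN (φ x) α ϑ β * dphi φ x i ϑ * dphi φ x j β

/-- The components `u_j` of `Δ̄^j τ(φ)`: `u_0 = τ(φ)` and
`u_{j+1} = Δ u_j + A(u_j, ∂u_j)` (local expression of the rough Laplacian). -/
def uvar (P : ChartData m n) (φ : (Fin m → ℝ) → Fin n → ℝ) :
    ℕ → (Fin m → ℝ) → Fin n → ℝ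
  | 0 => tension P φ
  | j+1 => fun x α => lap P (fun z => uvar P φ j z α) x + Asec P φ (uvar P φ j) x α

/-- `v_j = du_j`, i.e. `v_{j i}^α = ∂u_j^α/∂x^i`. -/
def vvar (P : ChartData m n) (φ : (Fin m → ℝ) → Fin n → ℝ) (j : ℕ) (x : Fin m → ℝ)
    (i : Fin m) (α : Fin n) : ℝ :=
  pd i (fun z => uvar P φ j z α) x

/-- Components of the pull-back covariant derivative
`(∇̄_{∂_i} σ)^γ = ∂σ^γ/∂x^i + Γ^γ_{βδ}(φ) φ_i^β σ^δ`. -/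
def covD (P : ChartData m n) (φ σ : (Fin m → ℝ) → Fin n → ℝ) (i : Fin m)
    (x : Fin m → ℝ) (γ : Fin n) : ℝ :=
  pd i (fun z => σ z γ) x + ∑ β, ∑ δ, P.ΓN (φ x) γ β δ * dphi φ x i β * σ x δ

/-- `(Tr_g R^N(X, dφ(·))dφ(·))^α`. -/
def trRphi (P : ChartData m n) (φ X : (Fin m → ℝ) → Fin n → ℝ) (x : Fin m → ℝ)
    (α : Fin n) : ℝ :=
  ∑ i, ∑ j, ∑ β, ∑ γ, ∑ δ,
    P.ginv x i j * Rc P (φ x) α δ β γ * X x β * dphi φ x i γ * dphi φ x j δ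

/-- `(Tr_g R^N(dφ(·), X)dφ(·))^α`. -/
def trRphi2 (P : ChartData m n) (φ X : (Fin m → ℝ) → Fin n → ℝ) (x : Fin m → ℝ)
    (α : Fin n) : ℝ :=
  ∑ i, ∑ j, ∑ β, ∑ γ, ∑ δ,
    P.ginv x i j * Rc P (φ x) α δ β γ * dphi φ x i β * X x γ * dphi φ x j δ

/-- `(Tr_g R^N(∇̄_{(·)}W, Z)dφ(·))^α`. -/
def trRD (P : ChartData m n) (φ W Z : (Fin m → ℝ) → Fin n → ℝ) (x : Fin m → ℝ)
    (α : Fin n) : ℝ :=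
  ∑ i, ∑ j, ∑ β, ∑ γ, ∑ δ,
    P.ginv x i j * Rc P (φ x) α δ β γ * covD P φ W i x β * Z x γ * dphi φ x j δ

/-- `(Tr_g R^N(W, ∇̄_{(·)}Z)dφ(·))^α`. -/
def trRD2 (P : ChartData m n) (φ W Z : (Fin m → ℝ) → Fin n → ℝ) (x : Fin m → ℝ)
    (α : Fin n) : ℝ :=
  ∑ i, ∑ j, ∑ β, ∑ γ, ∑ δ,
    P.ginv x i j * Rc P (φ x) α δ β γ * W x β * covD P φ Z i x γ * dphi φ x j δ

/-- Local components of Maeta's `k`-tension field `τ_k(φ)`, for `k = 2s`: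
`τ_{2s}(φ) = Δ̄^{2s-1}τ(φ) - R^N(Δ̄^{2s-2}τ(φ), dφ(e_j))dφ(e_j)
  - Σ_{ℓ=1}^{s-1}( R^N(∇̄_{e_j}Δ̄^{s+ℓ-2}τ(φ), Δ̄^{s-ℓ-1}τ(φ))dφ(e_j)
                 - R^N(Δ̄^{s+ℓ-2}τ(φ), ∇̄_{e_j}Δ̄^{s-ℓ-1}τ(φ))dφ(e_j) )`,
and for `k = 2s+1`:
`τ_{2s+1}(φ) = Δ̄^{2s}τ(φ) - R^N(Δ̄^{2s-1}τ(φ), dφ(e_j))dφ(e_j)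
  - Σ_{ℓ=1}^{s-1}( R^N(∇̄_{e_j}Δ̄^{s+ℓ-1}τ(φ), Δ̄^{s-ℓ-1}τ(φ))dφ(e_j)
                 - R^N(Δ̄^{s+ℓ-1}τ(φ), ∇̄_{e_j}Δ̄^{s-ℓ-1}τ(φ))dφ(e_j) )
  - R^N(∇̄_{e_j}Δ̄^{s-1}τ(φ), Δ̄^{s-1}τ(φ))dφ(e_j)`. -/
def tauK (P : ChartData m n) (φ : (Fin m → ℝ) → Fin n → ℝ) (k : ℕ) (x : Fin m → ℝ)
    (α : Fin n) : ℝ :=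
  if Even k then
    uvar P φ (k-1) x α - trRphi P φ (uvar P φ (k-2)) x α
      - ∑ ℓ ∈ Finset.Icc 1 (k/2 - 1),
          (trRD P φ (uvar P φ (k/2 + ℓ - 2)) (uvar P φ (k/2 - ℓ - 1)) x α
            - trRD2 P φ (uvar P φ (k/2 + ℓ - 2)) (uvar P φ (k/2 - ℓ - 1)) x α)
  else
    uvar P φ (k-1) x α - trRphi P φ (uvar P φ (k-2)) x α
      - (∑ ℓ ∈ Finset.Icc 1 (k/2 - 1),
          (trRD P φ (uvar P φ (k/2 + ℓ - 1)) (uvar P φ (k/2 - ℓ - 1)) x α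
            - trRD2 P φ (uvar P φ (k/2 + ℓ - 1)) (uvar P φ (k/2 - ℓ - 1)) x α))
      - trRD P φ (uvar P φ (k/2 - 1)) (uvar P φ (k/2 - 1)) x α

/-- Components `(∇dφ)(∂_i,∂_j)^α` of the second fundamental form of `φ`. -/
def sff (P : ChartData m n) (φ : (Fin m → ℝ) → Fin n → ℝ) (x : Fin m → ℝ)
    (i j : Fin m) (α : Fin n) : ℝ :=
  pd i (fun z => dphi φ z j α) x - (∑ k, P.ΓM x k i j * dphi φ x k α)
    + ∑ β, ∑ γ, P.ΓN (φ x) α β γ * dphi φ x i β * dphi φ x j γ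

/-- Christoffel symbols `Γ^α_{βγ}` of the round sphere `S^{d+1}` in the equator
coordinates `S^{d+1}∖{N,S} = (S^d × (0,π), sin²s·g̃ + ds²)`: here `gt = g̃` and
`Γt = Γ̃` are the metric and the Christoffel symbols of the equator `S^d`, the last
coordinate is `s`, and
`Γ^a_{bc} = Γ̃^a_{bc}`, `Γ^n_{bc} = -½ sin(2s) g̃_{bc}`,
`Γ^a_{nn} = Γ^n_{nn} = Γ^n_{bn} = 0`, `Γ^a_{bn} = (cos s/sin s)δ^a_b`. -/
def sphereΓ (d : ℕ) (gt : (Fin d → ℝ) → Fin d → Fin d → ℝ)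
    (Γt : (Fin d → ℝ) → Fin d → Fin d → Fin d → ℝ) :
    (Fin (d+1) → ℝ) → Fin (d+1) → Fin (d+1) → Fin (d+1) → ℝ :=
  fun y α β γ =>
    let s : ℝ := y (Fin.last d)
    let yt : Fin d → ℝ := fun a => y (Fin.castSucc a)
    if hα : (α : ℕ) < d then
      if hβ : (β : ℕ) < d then
        if hγ : (γ : ℕ) < d then Γt yt ⟨α.1, hα⟩ ⟨β.1, hβ⟩ ⟨γ.1, hγ⟩
        else (Real.cos s / Real.sin s) * (if (α : ℕ) = (β : ℕ) then 1 else 0)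
      else
        if (γ : ℕ) < d then
          (Real.cos s / Real.sin s) * (if (α : ℕ) = (γ : ℕ) then 1 else 0)
        else 0
    else
      if hβ : (β : ℕ) < d then
        if hγ : (γ : ℕ) < d then -(1/2) * Real.sin (2*s) * gt yt ⟨β.1, hβ⟩ ⟨γ.1, hγ⟩
        else 0
      else 0

/-- Components of the round metric `sin²s·g̃ + ds²` of `S^{d+1}` in equator coordinates. -/
def sphereMet (d : ℕ) (gt : (Fin d → ℝ) → Fin d → Fin d → ℝ) :
    (Fin (d+1) → ℝ) → Fin (d+1) → Fin (d+1) → ℝ :=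
  fun y β γ =>
    let s : ℝ := y (Fin.last d)
    let yt : Fin d → ℝ := fun a => y (Fin.castSucc a)
    if hβ : (β : ℕ) < d then
      if hγ : (γ : ℕ) < d then Real.sin s ^ 2 * gt yt ⟨β.1, hβ⟩ ⟨γ.1, hγ⟩ else 0
    else if (γ : ℕ) < d then 0 else 1

/-- `gt` is a Riemannian metric on the chart of `S^d` and `Γt` is the family of
Christoffel symbols of its Levi-Civita connection. -/
def LeviCivita (d : ℕ) (gt : (Fin d → ℝ) → Fin d → Fin d → ℝ)
    (Γt : (Fin d → ℝ) → Fin d → Fin d → Fin d → ℝ) : Prop :=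
  (∀ y a b, gt y a b = gt y b a) ∧
  (∀ y (v : Fin d → ℝ), v ≠ 0 → 0 < ∑ a, ∑ b, gt y a b * v a * v b) ∧
  (∀ y a b c, Γt y a b c = Γt y a c b) ∧
  (∀ y a b c, pd c (fun z => gt z a b) y
    = (∑ e, gt y e b * Γt y e c a) + ∑ e, gt y a e * Γt y e c b)

section Helpers

variable {m : ℕ}

lemma contDiff_pd {f : (Fin m → ℝ) → ℝ} (hf : ContDiff ℝ (⊤:ℕ∞) f) (i : Fin m) :
    ContDiff ℝ (⊤:ℕ∞) (fun x => pd i f x) := by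
  have h1 : ContDiff ℝ (⊤:ℕ∞) (fderiv ℝ f) := hf.fderiv_right (by simp)
  exact h1.clm_apply contDiff_const

lemma pd_add {f g : (Fin m → ℝ) → ℝ} {x : Fin m → ℝ} (hf : DifferentiableAt ℝ f x)
    (hg : DifferentiableAt ℝ g x) (i : Fin m) :
    pd i (fun x => f x + g x) x = pd i f x + pd i g x := by
  unfold pd; rw [fderiv_fun_add hf hg]; rfl

lemma pd_sub {f g : (Fin m → ℝ) → ℝ} {x : Fin m → ℝ} (hf : DifferentiableAt ℝ f x)
    (hg : DifferentiableAt ℝ g x) (i : Fin m) :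
    pd i (fun x => f x - g x) x = pd i f x - pd i g x := by
  unfold pd; rw [fderiv_fun_sub hf hg]; rfl

lemma pd_neg {f : (Fin m → ℝ) → ℝ} {x : Fin m → ℝ} (i : Fin m) :
    pd i (fun x => -f x) x = -pd i f x := by
  unfold pd; rw [fderiv_fun_neg]; rfl

lemma pd_const {x : Fin m → ℝ} (i : Fin m) (c : ℝ) :
    pd i (fun _ => c) x = 0 := by
  unfold pd; rw [fderiv_fun_const]; rfl

lemma pd_sub_const {f : (Fin m → ℝ) → ℝ} {x : Fin m → ℝ} (i : Fin m) (c : ℝ) :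
    pd i (fun x => f x - c) x = pd i f x := by
  unfold pd; rw [fderiv_sub_const]

lemma pd_mul {f g : (Fin m → ℝ) → ℝ} {x : Fin m → ℝ} (hf : DifferentiableAt ℝ f x)
    (hg : DifferentiableAt ℝ g x) (i : Fin m) :
    pd i (fun x => f x * g x) x = pd i f x * g x + f x * pd i g x := by
  unfold pd; rw [fderiv_fun_mul hf hg]
  simp [ContinuousLinearMap.add_apply, ContinuousLinearMap.smul_apply]
  ring

lemma pd_sum {ι : Type*} {s : Finset ι} {A : ι → (Fin m → ℝ) → ℝ} {x : Fin m → ℝ}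
    (h : ∀ j ∈ s, DifferentiableAt ℝ (A j) x) (i : Fin m) :
    pd i (fun x => ∑ j ∈ s, A j x) x = ∑ j ∈ s, pd i (A j) x := by
  unfold pd; rw [fderiv_fun_sum h]; simp

lemma pd_cos {h : (Fin m → ℝ) → ℝ} {x : Fin m → ℝ} (hh : DifferentiableAt ℝ h x) (i : Fin m) :
    pd i (fun x => Real.cos (h x)) x = -Real.sin (h x) * pd i h x := by
  have H : HasFDerivAt (fun x => Real.cos (h x)) (-Real.sin (h x) • fderiv ℝ h x) x :=
    (Real.hasDerivAt_cos (h x)).comp_hasFDerivAt x hh.hasFDerivAt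
  unfold pd; rw [H.fderiv]; simp

lemma vnorm_nonneg {ι : Type} [Fintype ι] (f : ι → ℝ) : 0 ≤ vnorm f :=
  Real.sqrt_nonneg _

lemma abs_le_vnorm {ι : Type} [Fintype ι] (f : ι → ℝ) (i : ι) : |f i| ≤ vnorm f := by
  rw [vnorm, ← Real.sqrt_sq_eq_abs]
  exact Real.sqrt_le_sqrt (Finset.single_le_sum (fun j _ => sq_nonneg (f j)) (Finset.mem_univ i))

lemma vnorm_le_sum {ι : Type} [Fintype ι] (f : ι → ℝ) : vnorm f ≤ ∑ i, |f i| := by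
  rw [vnorm]
  have h1 : ∑ i, f i ^ 2 ≤ (∑ i, |f i|) ^ 2 := by
    have h2 : ∀ i : ι, f i ^ 2 ≤ |f i| * ∑ j, |f j| := by
      intro i
      have : |f i| ≤ ∑ j, |f j| :=
        Finset.single_le_sum (fun j _ => abs_nonneg (f j)) (Finset.mem_univ i)
      calc f i ^ 2 = |f i| * |f i| := by rw [abs_mul_abs_self]; ring
        _ ≤ |f i| * ∑ j, |f j| := mul_le_mul_of_nonneg_left this (abs_nonneg _)
    calc ∑ i, f i ^ 2 ≤ ∑ i, |f i| * ∑ j, |f j| := Finset.sum_le_sum fun i _ => h2 i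
      _ = (∑ i, |f i|) ^ 2 := by rw [← Finset.sum_mul]; ring
  calc Real.sqrt (∑ i, f i ^ 2) ≤ Real.sqrt ((∑ i, |f i|) ^ 2) := Real.sqrt_le_sqrt h1
    _ = ∑ i, |f i| := Real.sqrt_sq (Finset.sum_nonneg fun i _ => abs_nonneg _)

end Helpers

section SumAbs

lemma abs_le_sum_abs {ι : Type*} [Fintype ι] (u : ι → ℝ) (i : ι) : |u i| ≤ ∑ j, |u j| :=
  Finset.single_le_sum (fun j _ => abs_nonneg (u j)) (Finset.mem_univ i)

lemma abs_le_sum_abs2 {ι κ : Type*} [Fintype ι] [Fintype κ] (u : ι → κ → ℝ) (i : ι) (l : κ) :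
    |u i l| ≤ ∑ i', ∑ l', |u i' l'| :=
  le_trans (abs_le_sum_abs (u i) l)
    (Finset.single_le_sum (f := fun i' => ∑ l', |u i' l'|)
      (fun i' _ => Finset.sum_nonneg fun _ _ => abs_nonneg _) (Finset.mem_univ i))

lemma abs_le_sum_abs3 {ι κ ν : Type*} [Fintype ι] [Fintype κ] [Fintype ν]
    (u : ι → κ → ν → ℝ) (i : ι) (l : κ) (e : ν) :
    |u i l e| ≤ ∑ i', ∑ l', ∑ e', |u i' l' e'| :=
  le_trans (abs_le_sum_abs2 (u i) l e)
    (Finset.single_le_sum (f := fun i' => ∑ l', ∑ e', |u i' l' e'|)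
      (fun i' _ => Finset.sum_nonneg fun _ _ => Finset.sum_nonneg fun _ _ => abs_nonneg _)
      (Finset.mem_univ i))

end SumAbs
section SphereHelpers

variable {m d : ℕ}

lemma contDiff_proj_comp {n : ℕ} {φ : (Fin m → ℝ) → Fin n → ℝ}
    (hφ : ContDiff ℝ (⊤:ℕ∞) φ) (α : Fin n) :
    ContDiff ℝ (⊤:ℕ∞) (fun x => φ x α) := by
  have h : ContDiff ℝ (⊤:ℕ∞) (fun y : Fin n → ℝ => y α) := (ContinuousLinearMap.proj (R := ℝ) (φ := fun _ : Fin n => ℝ) α).contDiff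
  exact h.comp hφ

lemma contDiff_front : ContDiff ℝ (⊤:ℕ∞) (fun (z : Fin (d+1) → ℝ) (a : Fin d) => z a.castSucc) :=
  contDiff_pi.2 fun a => (ContinuousLinearMap.proj (R := ℝ) (φ := fun _ : Fin (d+1) => ℝ) a.castSucc).contDiff

/-- The open set where the equator-coordinate Christoffel symbols are smooth. -/
def sphereV (d : ℕ) : Set (Fin (d+1) → ℝ) := {z | Real.sin (z (Fin.last d)) ≠ 0}

lemma isOpen_sphereV : IsOpen (sphereV d) := by
  have : sphereV d = (fun z : Fin (d+1) → ℝ => Real.sin (z (Fin.last d))) ⁻¹' ({0}ᶜ) := by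
    ext z; simp [sphereV]
  rw [this]
  exact isOpen_compl_singleton.preimage (Real.continuous_sin.comp (continuous_apply _))

lemma contDiffOn_sphereΓ
    {gt : (Fin d → ℝ) → Fin d → Fin d → ℝ}
    {Γt : (Fin d → ℝ) → Fin d → Fin d → Fin d → ℝ}
    (hgt : ∀ a b, ContDiff ℝ (⊤ : ℕ∞) fun y => gt y a b)
    (hΓt : ∀ a b c, ContDiff ℝ (⊤ : ℕ∞) fun y => Γt y a b c)
    (α β γ : Fin (d+1)) :
    ContDiffOn ℝ (⊤:ℕ∞) (fun z => sphereΓ d gt Γt z α β γ) (sphereV d) := by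
  have hproj : ContDiff ℝ (⊤:ℕ∞) (fun z : Fin (d+1) → ℝ => z (Fin.last d)) :=
    (ContinuousLinearMap.proj (R := ℝ) (φ := fun _ : Fin (d+1) => ℝ) (Fin.last d)).contDiff
  by_cases hα : (α:ℕ) < d
  · by_cases hβ : (β:ℕ) < d
    · by_cases hγ : (γ:ℕ) < d
      · have he : (fun z => sphereΓ d gt Γt z α β γ)
            = fun z => Γt (fun a => z a.castSucc) ⟨α.1, hα⟩ ⟨β.1, hβ⟩ ⟨γ.1, hγ⟩ := by
          funext z; simp [sphereΓ, hα, hβ, hγ]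
        rw [he]
        exact ((hΓt _ _ _).comp contDiff_front).contDiffOn
      · have he : (fun z => sphereΓ d gt Γt z α β γ)
            = fun z => (Real.cos (z (Fin.last d)) / Real.sin (z (Fin.last d)))
                * (if (α:ℕ) = (β:ℕ) then (1:ℝ) else 0) := by
          funext z; simp [sphereΓ, hα, hβ, hγ]
        rw [he]
        exact (((Real.contDiff_cos.comp hproj).contDiffOn.div
          (Real.contDiff_sin.comp hproj).contDiffOn (fun z hz => hz)).mul contDiffOn_const)
    · by_cases hγ : (γ:ℕ) < d
      · have he : (fun z => sphereΓ d gt Γt z α β γ)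
            = fun z => (Real.cos (z (Fin.last d)) / Real.sin (z (Fin.last d)))
                * (if (α:ℕ) = (γ:ℕ) then (1:ℝ) else 0) := by
          funext z; simp [sphereΓ, hα, hβ, hγ]
        rw [he]
        exact (((Real.contDiff_cos.comp hproj).contDiffOn.div
          (Real.contDiff_sin.comp hproj).contDiffOn (fun z hz => hz)).mul contDiffOn_const)
      · have he : (fun z => sphereΓ d gt Γt z α β γ) = fun _ => (0:ℝ) := by
          funext z; simp [sphereΓ, hα, hβ, hγ]
        rw [he]; exact contDiffOn_const
  · by_cases hβ : (β:ℕ) < d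
    · by_cases hγ : (γ:ℕ) < d
      · have he : (fun z => sphereΓ d gt Γt z α β γ)
            = fun z => -(1/2) * Real.sin (2 * z (Fin.last d))
                * gt (fun a => z a.castSucc) ⟨β.1, hβ⟩ ⟨γ.1, hγ⟩ := by
          funext z; simp [sphereΓ, hα, hβ, hγ]
        rw [he]
        exact ((contDiff_const.mul (Real.contDiff_sin.comp (contDiff_const.mul hproj))).mul
          ((hgt _ _).comp contDiff_front)).contDiffOn
      · have he : (fun z => sphereΓ d gt Γt z α β γ) = fun _ => (0:ℝ) := by
          funext z; simp [sphereΓ, hα, hβ, hγ]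
        rw [he]; exact contDiffOn_const
    · have he : (fun z => sphereΓ d gt Γt z α β γ) = fun _ => (0:ℝ) := by
        funext z; simp [sphereΓ, hα, hβ]
      rw [he]; exact contDiffOn_const

end SphereHelpers
section CompHelpers

variable {m d : ℕ}
variable {gt : (Fin d → ℝ) → Fin d → Fin d → ℝ}
variable {Γt : (Fin d → ℝ) → Fin d → Fin d → Fin d → ℝ}
variable {φ : (Fin m → ℝ) → Fin (d+1) → ℝ}

lemma mem_sphereV (hchart : ∀ x, 0 < φ x (Fin.last d) ∧ φ x (Fin.last d) < Real.pi)
    (x : Fin m → ℝ) : φ x ∈ sphereV d :=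
  ne_of_gt (Real.sin_pos_of_pos_of_lt_pi (hchart x).1 (hchart x).2)

lemma smooth_sphereΓφ
    (hgt : ∀ a b, ContDiff ℝ (⊤ : ℕ∞) fun y => gt y a b)
    (hΓt : ∀ a b c, ContDiff ℝ (⊤ : ℕ∞) fun y => Γt y a b c)
    (hφ : ContDiff ℝ (⊤ : ℕ∞) φ)
    (hchart : ∀ x, 0 < φ x (Fin.last d) ∧ φ x (Fin.last d) < Real.pi)
    (α β γ : Fin (d+1)) :
    ContDiff ℝ (⊤:ℕ∞) (fun x => sphereΓ d gt Γt (φ x) α β γ) :=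
  (contDiffOn_sphereΓ hgt hΓt α β γ).comp_contDiff hφ (mem_sphereV hchart)

lemma smooth_pd_sphereΓφ
    (hgt : ∀ a b, ContDiff ℝ (⊤ : ℕ∞) fun y => gt y a b)
    (hΓt : ∀ a b c, ContDiff ℝ (⊤ : ℕ∞) fun y => Γt y a b c)
    (hφ : ContDiff ℝ (⊤ : ℕ∞) φ)
    (hchart : ∀ x, 0 < φ x (Fin.last d) ∧ φ x (Fin.last d) < Real.pi)
    (ω α β γ : Fin (d+1)) :
    ContDiff ℝ (⊤:ℕ∞) (fun x => pd ω (fun z => sphereΓ d gt Γt z α β γ) (φ x)) := by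
  have h1 : ContDiffOn ℝ (⊤:ℕ∞) (fun z => pd ω (fun w => sphereΓ d gt Γt w α β γ) z)
      (sphereV d) := by
    have h2 : ContDiffOn ℝ (⊤:ℕ∞) (fderiv ℝ (fun w => sphereΓ d gt Γt w α β γ)) (sphereV d) :=
      (contDiffOn_sphereΓ hgt hΓt α β γ).fderiv_of_isOpen isOpen_sphereV (by simp)
    exact h2.clm_apply contDiffOn_const
  exact h1.comp_contDiff hφ (mem_sphereV hchart)

end CompHelpers

section ChartHelpers

variable {m n : ℕ} {P : ChartData m n} {φ : (Fin m → ℝ) → Fin n → ℝ}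

lemma smooth_dphi (hφ : ContDiff ℝ (⊤:ℕ∞) φ) (i : Fin m) (β : Fin n) :
    ContDiff ℝ (⊤:ℕ∞) (fun x => dphi φ x i β) :=
  contDiff_pd (contDiff_proj_comp hφ β) i

lemma smooth_lap (hPdom : P.SmoothDomain) {f : (Fin m → ℝ) → ℝ} (hf : ContDiff ℝ (⊤:ℕ∞) f) :
    ContDiff ℝ (⊤:ℕ∞) (fun x => lap P f x) := by
  unfold lap
  apply ContDiff.neg
  apply ContDiff.sub
  · apply ContDiff.sum; intro i _; apply ContDiff.sum; intro j _
    exact (hPdom.1 i j).mul (contDiff_pd (contDiff_pd hf j) i)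
  · apply ContDiff.sum; intro i _; apply ContDiff.sum; intro j _; apply ContDiff.sum; intro k _
    exact ((hPdom.1 i j).mul (hPdom.2 k i j)).mul (contDiff_pd hf k)

variable (hPdom : P.SmoothDomain) (hφ : ContDiff ℝ (⊤:ℕ∞) φ)
  (hΓNφ : ∀ α β γ, ContDiff ℝ (⊤:ℕ∞) (fun x => P.ΓN (φ x) α β γ))
  (hpdΓNφ : ∀ ω α β γ, ContDiff ℝ (⊤:ℕ∞) (fun x => pd ω (fun z => P.ΓN z α β γ) (φ x)))

include hPdom hφ hΓNφ in
lemma smooth_tension (α : Fin n) : ContDiff ℝ (⊤:ℕ∞) (fun x => tension P φ x α) := by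
  unfold tension
  apply ContDiff.add
  · exact (smooth_lap hPdom (contDiff_proj_comp hφ α)).neg
  · apply ContDiff.sum; intro i _; apply ContDiff.sum; intro j _
    apply ContDiff.sum; intro ϑ _; apply ContDiff.sum; intro β _
    exact (((hPdom.1 i j).mul (hΓNφ α ϑ β)).mul (smooth_dphi hφ i ϑ)).mul (smooth_dphi hφ j β)

include hΓNφ hpdΓNφ in
lemma smooth_Scoefφ (α β ω ϑ : Fin n) :
    ContDiff ℝ (⊤:ℕ∞) (fun x => Scoef P (φ x) α β ω ϑ) := by
  unfold Scoef
  apply ContDiff.div_const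
  apply ContDiff.add
  apply ContDiff.add
  apply ContDiff.add
  · exact hpdΓNφ ω α β ϑ
  · apply ContDiff.sum; intro γ _; exact (hΓNφ γ β ϑ).mul (hΓNφ α ω γ)
  · exact hpdΓNφ β α ω ϑ
  · apply ContDiff.sum; intro γ _; exact (hΓNφ γ ω ϑ).mul (hΓNφ α β γ)

include hPdom hφ hΓNφ hpdΓNφ in
lemma smooth_Asec {σ : (Fin m → ℝ) → Fin n → ℝ}
    (hσ : ∀ α, ContDiff ℝ (⊤:ℕ∞) (fun x => σ x α)) (α : Fin n) :
    ContDiff ℝ (⊤:ℕ∞) (fun x => Asec P φ σ x α) := by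
  unfold Asec Aop
  apply ContDiff.add
  · apply ContDiff.sum; intro ϑ _; apply ContDiff.sum; intro i _
    apply ContDiff.mul
    · exact contDiff_pd (hσ ϑ) i
    · apply ContDiff.mul contDiff_const
      apply ContDiff.sum; intro j _; apply ContDiff.sum; intro β _
      exact ((hPdom.1 i j).mul (smooth_dphi hφ j β)).mul (hΓNφ α β ϑ)
  · apply ContDiff.sum; intro ϑ _
    apply ContDiff.mul (hσ ϑ)
    apply ContDiff.sub
    · apply ContDiff.sum; intro β _
      exact (smooth_lap hPdom (contDiff_proj_comp hφ β)).mul (hΓNφ α β ϑ)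
    · apply ContDiff.sum; intro i _; apply ContDiff.sum; intro j _
      apply ContDiff.sum; intro β _; apply ContDiff.sum; intro ω _
      exact (((hPdom.1 i j).mul (smooth_dphi hφ j β)).mul (smooth_dphi hφ i ω)).mul
        (smooth_Scoefφ hΓNφ hpdΓNφ α β ω ϑ)

include hPdom hφ hΓNφ hpdΓNφ in
lemma smooth_uvar : ∀ (j : ℕ) (α : Fin n), ContDiff ℝ (⊤:ℕ∞) (fun x => uvar P φ j x α) := by
  intro j
  induction j with
  | zero => exact fun α => smooth_tension hPdom hφ hΓNφ α
  | succ j ih =>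
    intro α
    show ContDiff ℝ (⊤:ℕ∞)
      (fun x => lap P (fun z => uvar P φ j z α) x + Asec P φ (uvar P φ j) x α)
    exact (smooth_lap hPdom (ih α)).add (smooth_Asec hPdom hφ hΓNφ hpdΓNφ ih α)

end ChartHelpers
section Ctrl

variable {m d : ℕ}

/-- Controlled functions: `cos(φ^n)·(smooth) + Σ_i ∂_iφ^n·(smooth)`. -/
def Ctrl (φ : (Fin m → ℝ) → Fin (d+1) → ℝ) (F : (Fin m → ℝ) → ℝ) : Prop :=
  ∃ G : (Fin m → ℝ) → ℝ, ∃ H : Fin m → (Fin m → ℝ) → ℝ,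
    ContDiff ℝ (⊤:ℕ∞) G ∧ (∀ i, ContDiff ℝ (⊤:ℕ∞) (H i)) ∧
    ∀ x, F x = Real.cos (φ x (Fin.last d)) * G x
      + ∑ i, pd i (fun w => φ w (Fin.last d)) x * H i x

variable {φ : (Fin m → ℝ) → Fin (d+1) → ℝ}

lemma ctrl_of_eq {F F' : (Fin m → ℝ) → ℝ} (h : Ctrl φ F) (he : ∀ x, F' x = F x) :
    Ctrl φ F' := by
  obtain ⟨G, H, hG, hH, heq⟩ := h
  exact ⟨G, H, hG, hH, fun x => (he x).trans (heq x)⟩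

lemma ctrl_zero : Ctrl φ (fun _ => (0:ℝ)) :=
  ⟨fun _ => 0, fun _ _ => 0, contDiff_const, fun _ => contDiff_const, by simp⟩

lemma ctrl_cos_mul {G : (Fin m → ℝ) → ℝ} (hG : ContDiff ℝ (⊤:ℕ∞) G) :
    Ctrl φ (fun x => Real.cos (φ x (Fin.last d)) * G x) :=
  ⟨G, fun _ _ => 0, hG, fun _ => contDiff_const, by simp⟩

lemma ctrl_grad_mul (i : Fin m) {G : (Fin m → ℝ) → ℝ} (hG : ContDiff ℝ (⊤:ℕ∞) G) :
    Ctrl φ (fun x => pd i (fun w => φ w (Fin.last d)) x * G x) := by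
  refine ⟨fun _ => 0, fun j x => if j = i then G x else 0, contDiff_const, ?_, ?_⟩
  · intro j
    by_cases hj : j = i
    · simp only [hj, if_true]; exact hG
    · simp only [hj, if_false]; exact contDiff_const
  · intro x
    rw [mul_zero, zero_add]
    rw [Finset.sum_eq_single i]
    · simp
    · intro b _ hb; simp [hb]
    · intro hi; exact absurd (Finset.mem_univ i) hi

lemma ctrl_add {F1 F2 : (Fin m → ℝ) → ℝ} (h1 : Ctrl φ F1) (h2 : Ctrl φ F2) :
    Ctrl φ (fun x => F1 x + F2 x) := by
  obtain ⟨G1, H1, hG1, hH1, he1⟩ := h1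
  obtain ⟨G2, H2, hG2, hH2, he2⟩ := h2
  refine ⟨fun x => G1 x + G2 x, fun i x => H1 i x + H2 i x, hG1.add hG2,
    fun i => (hH1 i).add (hH2 i), fun x => ?_⟩
  dsimp only
  rw [he1 x, he2 x]
  rw [mul_add]
  rw [show (∑ i, pd i (fun w => φ w (Fin.last d)) x * (H1 i x + H2 i x))
    = (∑ i, pd i (fun w => φ w (Fin.last d)) x * H1 i x)
      + ∑ i, pd i (fun w => φ w (Fin.last d)) x * H2 i x by
    rw [← Finset.sum_add_distrib]; exact Finset.sum_congr rfl fun i _ => by ring]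
  ring

lemma ctrl_mul_right {F g : (Fin m → ℝ) → ℝ} (h : Ctrl φ F) (hg : ContDiff ℝ (⊤:ℕ∞) g) :
    Ctrl φ (fun x => F x * g x) := by
  obtain ⟨G, H, hG, hH, he⟩ := h
  refine ⟨fun x => G x * g x, fun i x => H i x * g x, hG.mul hg,
    fun i => (hH i).mul hg, fun x => ?_⟩
  dsimp only
  rw [he x, add_mul, Finset.sum_mul]
  congr 1
  · ring
  · exact Finset.sum_congr rfl fun i _ => by ring

lemma ctrl_mul_left {F g : (Fin m → ℝ) → ℝ} (h : Ctrl φ F) (hg : ContDiff ℝ (⊤:ℕ∞) g) :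
    Ctrl φ (fun x => g x * F x) :=
  ctrl_of_eq (ctrl_mul_right h hg) fun x => by ring

lemma ctrl_neg {F : (Fin m → ℝ) → ℝ} (h : Ctrl φ F) : Ctrl φ (fun x => -F x) :=
  ctrl_of_eq (ctrl_mul_right h (contDiff_const (c := (-1:ℝ)))) fun x => by ring

lemma ctrl_sub {F1 F2 : (Fin m → ℝ) → ℝ} (h1 : Ctrl φ F1) (h2 : Ctrl φ F2) :
    Ctrl φ (fun x => F1 x - F2 x) :=
  ctrl_of_eq (ctrl_add h1 (ctrl_neg h2)) fun x => by ring

lemma ctrl_div_const {F : (Fin m → ℝ) → ℝ} (h : Ctrl φ F) (c : ℝ) :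
    Ctrl φ (fun x => F x / c) :=
  ctrl_of_eq (ctrl_mul_right h (contDiff_const (c := c⁻¹))) fun x => by
    rw [div_eq_mul_inv]

lemma ctrl_sum {ι : Type*} (s : Finset ι) (F : ι → (Fin m → ℝ) → ℝ)
    (h : ∀ t ∈ s, Ctrl φ (F t)) : Ctrl φ (fun x => ∑ t ∈ s, F t x) := by
  induction s using Finset.cons_induction with
  | empty => exact ctrl_of_eq ctrl_zero (by simp)
  | cons a s ha ih =>
    have := ctrl_add (h a (Finset.mem_cons_self a s))
      (ih fun t ht => h t (Finset.mem_cons_of_mem ht))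
    exact ctrl_of_eq this fun x => by rw [Finset.sum_cons]

end Ctrl
section SphereCtrl

variable {m d : ℕ}
variable {gt : (Fin d → ℝ) → Fin d → Fin d → ℝ}
variable {Γt : (Fin d → ℝ) → Fin d → Fin d → Fin d → ℝ}
variable {φ : (Fin m → ℝ) → Fin (d+1) → ℝ}

lemma pd_eval {k : ℕ} (i ℓ : Fin k) (x : Fin k → ℝ) :
    pd i (fun z => z ℓ) x = (Pi.single i 1 : Fin k → ℝ) ℓ := by
  unfold pd
  have h : (fun z : Fin k → ℝ => z ℓ)
      = (ContinuousLinearMap.proj ℓ : (Fin k → ℝ) →L[ℝ] ℝ) := rfl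
  rw [h, ContinuousLinearMap.fderiv]
  rfl

/-- The last-index Christoffel symbols of the sphere factor through `cos s`. -/
lemma ΓN_last_fact
    (hgt : ∀ a b, ContDiff ℝ (⊤ : ℕ∞) fun y => gt y a b)
    (hφ : ContDiff ℝ (⊤ : ℕ∞) φ) (β ϑ : Fin (d+1)) :
    ∃ G : (Fin m → ℝ) → ℝ, ContDiff ℝ (⊤:ℕ∞) G ∧ ∀ x,
      sphereΓ d gt Γt (φ x) (Fin.last d) β ϑ = Real.cos (φ x (Fin.last d)) * G x := by
  by_cases hβ : (β:ℕ) < d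
  · by_cases hϑ : (ϑ:ℕ) < d
    · refine ⟨fun x => -Real.sin (φ x (Fin.last d))
          * gt (fun a => φ x a.castSucc) ⟨β.1, hβ⟩ ⟨ϑ.1, hϑ⟩, ?_, ?_⟩
      · exact ((Real.contDiff_sin.comp (contDiff_proj_comp hφ _)).neg).mul
          ((hgt _ _).comp (contDiff_front.comp hφ))
      · intro x
        simp only [sphereΓ, Fin.val_last, lt_irrefl, dif_neg, not_false_iff, hβ, hϑ,
          dif_pos]
        rw [Real.sin_two_mul]; ring
    · exact ⟨fun _ => 0, contDiff_const, fun x => by simp [sphereΓ, hβ, hϑ]⟩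
  · exact ⟨fun _ => 0, contDiff_const, fun x => by simp [sphereΓ, hβ]⟩

/-- Tangential derivatives of the last-index Christoffel symbols are controlled. -/
lemma ctrl_pdΓN_last_tangential
    (hgt : ∀ a b, ContDiff ℝ (⊤ : ℕ∞) fun y => gt y a b)
    (hφ : ContDiff ℝ (⊤ : ℕ∞) φ)
    (ω β ϑ : Fin (d+1)) (hω : (ω:ℕ) < d) (hβ : (β:ℕ) < d) :
    Ctrl φ (fun x => pd ω (fun z => sphereΓ d gt Γt z (Fin.last d) β ϑ) (φ x)) := by
  by_cases hϑ : (ϑ:ℕ) < d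
  · have hproj : ContDiff ℝ (⊤:ℕ∞) (fun z : Fin (d+1) → ℝ => z (Fin.last d)) :=
      (ContinuousLinearMap.proj (R := ℝ) (φ := fun _ : Fin (d+1) => ℝ) (Fin.last d)).contDiff
    have hq : ContDiff ℝ (⊤:ℕ∞) (fun z : Fin (d+1) → ℝ =>
        -Real.sin (z (Fin.last d)) * gt (fun a => z a.castSucc) ⟨β.1, hβ⟩ ⟨ϑ.1, hϑ⟩) :=
      ((Real.contDiff_sin.comp hproj).neg).mul ((hgt _ _).comp contDiff_front)
    have hfun : (fun z => sphereΓ d gt Γt z (Fin.last d) β ϑ)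
        = fun z => Real.cos (z (Fin.last d)) *
            (-Real.sin (z (Fin.last d)) * gt (fun a => z a.castSucc) ⟨β.1, hβ⟩ ⟨ϑ.1, hϑ⟩) := by
      funext z
      simp only [sphereΓ, Fin.val_last, lt_irrefl, dif_neg, not_false_iff, hβ, hϑ, dif_pos]
      rw [Real.sin_two_mul]; ring
    have hcos : ContDiff ℝ (⊤:ℕ∞) (fun z : Fin (d+1) → ℝ => Real.cos (z (Fin.last d))) :=
      Real.contDiff_cos.comp hproj
    have hpd : ∀ z, pd ω (fun z => sphereΓ d gt Γt z (Fin.last d) β ϑ) z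
        = Real.cos (z (Fin.last d)) * pd ω (fun z : Fin (d+1) → ℝ =>
            -Real.sin (z (Fin.last d)) * gt (fun a => z a.castSucc) ⟨β.1, hβ⟩ ⟨ϑ.1, hϑ⟩) z := by
      intro z
      rw [hfun]
      rw [pd_mul (hcos.differentiable (by simp) z) (hq.differentiable (by simp) z)]
      have h1 : pd ω (fun z : Fin (d+1) → ℝ => Real.cos (z (Fin.last d))) z
          = -Real.sin (z (Fin.last d)) * pd ω (fun z : Fin (d+1) → ℝ => z (Fin.last d)) z :=
        pd_cos (hproj.differentiable (by simp) z) ω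
      have h2 : pd ω (fun z : Fin (d+1) → ℝ => z (Fin.last d)) z = 0 := by
        rw [pd_eval]
        exact Pi.single_eq_of_ne (by
          intro h
          rw [← h] at hω
          simp at hω) 1
      rw [h1, h2]
      ring
    have hctrl : Ctrl φ (fun x => Real.cos (φ x (Fin.last d)) *
        pd ω (fun z : Fin (d+1) → ℝ =>
          -Real.sin (z (Fin.last d)) * gt (fun a => z a.castSucc) ⟨β.1, hβ⟩ ⟨ϑ.1, hϑ⟩) (φ x)) :=
      ctrl_cos_mul ((contDiff_pd hq ω).comp hφ)
    exact ctrl_of_eq hctrl fun x => hpd (φ x)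
  · have hfun : (fun z => sphereΓ d gt Γt z (Fin.last d) β ϑ) = fun _ => (0:ℝ) := by
      funext z; simp [sphereΓ, hβ, hϑ]
    have : Ctrl φ (fun x => pd ω (fun z => sphereΓ d gt Γt z (Fin.last d) β ϑ) (φ x)) := by
      have hz : ∀ z, pd ω (fun z => sphereΓ d gt Γt z (Fin.last d) β ϑ) z = 0 := by
        intro z; rw [hfun]; exact pd_const ω 0
      exact ctrl_of_eq ctrl_zero fun x => hz (φ x)
    exact this

end SphereCtrl
section MainCtrl

variable {m d : ℕ} {P : ChartData m (d+1)}
variable {gt : (Fin d → ℝ) → Fin d → Fin d → ℝ}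
variable {Γt : (Fin d → ℝ) → Fin d → Fin d → Fin d → ℝ}
variable {φ : (Fin m → ℝ) → Fin (d+1) → ℝ}
variable (hΓN : P.ΓN = sphereΓ d gt Γt)
variable (hgt : ∀ a b, ContDiff ℝ (⊤ : ℕ∞) fun y => gt y a b)
variable (hΓt : ∀ a b c, ContDiff ℝ (⊤ : ℕ∞) fun y => Γt y a b c)
variable (hφ : ContDiff ℝ (⊤ : ℕ∞) φ)
variable (hchart : ∀ x, 0 < φ x (Fin.last d) ∧ φ x (Fin.last d) < Real.pi)

include hΓN hgt hΓt hφ hchart in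
lemma ctrl_Scoef_last (β ω ϑ : Fin (d+1)) (hβ : (β:ℕ) < d) (hω : (ω:ℕ) < d) :
    Ctrl φ (fun x => Scoef P (φ x) (Fin.last d) β ω ϑ) := by
  have h := fun (a b : Fin (d+1)) => ΓN_last_fact (Γt := Γt) hgt hφ a b
  choose G hGsm hGeq using h
  have hsc : ∀ x, Scoef P (φ x) (Fin.last d) β ω ϑ =
      (pd ω (fun z => sphereΓ d gt Γt z (Fin.last d) β ϑ) (φ x)
       + (∑ γ, sphereΓ d gt Γt (φ x) γ β ϑ * sphereΓ d gt Γt (φ x) (Fin.last d) ω γ)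
       + pd β (fun z => sphereΓ d gt Γt z (Fin.last d) ω ϑ) (φ x)
       + ∑ γ, sphereΓ d gt Γt (φ x) γ ω ϑ * sphereΓ d gt Γt (φ x) (Fin.last d) β γ) / 2 := by
    intro x; simp only [Scoef, hΓN]
  refine ctrl_of_eq ?_ hsc
  apply ctrl_div_const
  refine ctrl_add (ctrl_add (ctrl_add ?_ ?_) ?_) ?_
  · exact ctrl_pdΓN_last_tangential hgt hφ ω β ϑ hω hβ
  · apply ctrl_sum; intro γ _
    exact ctrl_mul_left (ctrl_of_eq (ctrl_cos_mul (hGsm ω γ)) (hGeq ω γ))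
      (smooth_sphereΓφ hgt hΓt hφ hchart γ β ϑ)
  · exact ctrl_pdΓN_last_tangential hgt hφ β ω ϑ hβ hω
  · apply ctrl_sum; intro γ _
    exact ctrl_mul_left (ctrl_of_eq (ctrl_cos_mul (hGsm β γ)) (hGeq β γ))
      (smooth_sphereΓφ hgt hΓt hφ hchart γ ω ϑ)

include hΓN hgt hΓt hφ hchart in
lemma ctrl_Asec_last (hPdom : P.SmoothDomain) {σ : (Fin m → ℝ) → Fin (d+1) → ℝ}
    (hσ : ∀ α, ContDiff ℝ (⊤:ℕ∞) (fun x => σ x α)) :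
    Ctrl φ (fun x => Asec P φ σ x (Fin.last d)) := by
  have hΓNφ : ∀ α β γ, ContDiff ℝ (⊤:ℕ∞) (fun x => P.ΓN (φ x) α β γ) := by
    intro α β γ; simp only [hΓN]; exact smooth_sphereΓφ hgt hΓt hφ hchart α β γ
  have hpdΓNφ : ∀ ω α β γ,
      ContDiff ℝ (⊤:ℕ∞) (fun x => pd ω (fun z => P.ΓN z α β γ) (φ x)) := by
    intro ω α β γ; simp only [hΓN]; exact smooth_pd_sphereΓφ hgt hΓt hφ hchart ω α β γ
  have h := fun (a b : Fin (d+1)) => ΓN_last_fact (Γt := Γt) hgt hφ a b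
  choose G hGsm hGeq using h
  have hΓlast : ∀ β ϑ, Ctrl φ (fun x => P.ΓN (φ x) (Fin.last d) β ϑ) := by
    intro β ϑ
    refine ctrl_of_eq (ctrl_cos_mul (hGsm β ϑ)) ?_
    intro x; rw [hΓN]; exact hGeq β ϑ x
  unfold Asec Aop
  apply ctrl_add
  · apply ctrl_sum; intro ϑ _; apply ctrl_sum; intro i _
    have hin : Ctrl φ (fun x =>
        (-2:ℝ) * ∑ j, ∑ β, P.ginv x i j * dphi φ x j β * P.ΓN (φ x) (Fin.last d) β ϑ) := by
      apply ctrl_mul_left ?_ (contDiff_const (c := (-2:ℝ)))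
      apply ctrl_sum; intro j _; apply ctrl_sum; intro β _
      exact ctrl_mul_left (hΓlast β ϑ) ((hPdom.1 i j).mul (smooth_dphi hφ j β))
    exact ctrl_mul_left hin (contDiff_pd (hσ ϑ) i)
  · apply ctrl_sum; intro ϑ _
    apply ctrl_mul_left ?_ (hσ ϑ)
    apply ctrl_sub
    · apply ctrl_sum; intro β _
      exact ctrl_mul_left (hΓlast β ϑ) (smooth_lap hPdom (contDiff_proj_comp hφ β))
    · apply ctrl_sum; intro i _; apply ctrl_sum; intro j _
      apply ctrl_sum; intro β _; apply ctrl_sum; intro ω _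
      by_cases hβ : (β:ℕ) < d
      · by_cases hω : (ω:ℕ) < d
        · exact ctrl_mul_left (ctrl_Scoef_last hΓN hgt hΓt hφ hchart β ω ϑ hβ hω)
            (((hPdom.1 i j).mul (smooth_dphi hφ j β)).mul (smooth_dphi hφ i ω))
        · have hω2 := ω.isLt
          have hωl : ω = Fin.last d := by
            apply Fin.ext; rw [Fin.val_last]; omega
          subst hωl
          refine ctrl_of_eq (ctrl_grad_mul i
            (G := fun x => P.ginv x i j * dphi φ x j β * Scoef P (φ x) (Fin.last d) β (Fin.last d) ϑ)
            (((hPdom.1 i j).mul (smooth_dphi hφ j β)).mul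
              (smooth_Scoefφ hΓNφ hpdΓNφ _ _ _ _))) ?_
          intro x
          show P.ginv x i j * dphi φ x j β * dphi φ x i (Fin.last d)
              * Scoef P (φ x) (Fin.last d) β (Fin.last d) ϑ = _
          simp only [dphi]
          ring
      · have hβ2 := β.isLt
        have hβl : β = Fin.last d := by
          apply Fin.ext; rw [Fin.val_last]; omega
        subst hβl
        refine ctrl_of_eq (ctrl_grad_mul j
          (G := fun x => P.ginv x i j * dphi φ x i ω * Scoef P (φ x) (Fin.last d) (Fin.last d) ω ϑ)
          (((hPdom.1 i j).mul (smooth_dphi hφ i ω)).mul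
            (smooth_Scoefφ hΓNφ hpdΓNφ _ _ _ _))) ?_
        intro x
        show P.ginv x i j * dphi φ x j (Fin.last d) * dphi φ x i ω
            * Scoef P (φ x) (Fin.last d) (Fin.last d) ω ϑ = _
        simp only [dphi]
        ring

end MainCtrl
/-- (Lemma 2.10 of the paper.)
Let `φ : M → S^n` (`n = d+1`) be a smooth map in the equator coordinates, with
`f = φ^n - π/2`. Then on any open set `D` with compact closure contained in the
chart domain `U`, for `0 ≤ j ≤ k-3` there exists `C > 0` with
`|dA^n_{j+1}| ≤ C(|f| + |df| + |∇df|)`. -/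
theorem sphere_estimate_dA
    {m d : ℕ} (P : ChartData m (d+1))
    (gt : (Fin d → ℝ) → Fin d → Fin d → ℝ)
    (Γt : (Fin d → ℝ) → Fin d → Fin d → Fin d → ℝ)
    (hΓN : P.ΓN = sphereΓ d gt Γt)
    (hPdom : P.SmoothDomain) (hPriem : P.Riemannian)
    (hgt : ∀ a b, ContDiff ℝ (⊤ : ℕ∞) fun y => gt y a b)
    (hΓt : ∀ a b c, ContDiff ℝ (⊤ : ℕ∞) fun y => Γt y a b c)
    (hLC : LeviCivita d gt Γt)
    (U : Set (Fin m → ℝ)) (hUopen : IsOpen U)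
    (φ : (Fin m → ℝ) → Fin (d+1) → ℝ) (hφ : ContDiff ℝ (⊤ : ℕ∞) φ)
    (hchart : ∀ x, 0 < φ x (Fin.last d) ∧ φ x (Fin.last d) < Real.pi)
    (k : ℕ) (hk : 3 ≤ k)
    (D : Set (Fin m → ℝ)) (hDopen : IsOpen D) (hDcpt : IsCompact (closure D))
    (hDsub : closure D ⊆ U) :
    ∀ j ≤ k - 3, ∃ C > 0, ∀ x ∈ D,
      vnorm (fun i : Fin m =>
          pd i (fun z => Asec P φ (uvar P φ j) z (Fin.last d)) x)
        ≤ C * (|φ x (Fin.last d) - Real.pi / 2|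
          + vnorm (fun i : Fin m => pd i (fun w => φ w (Fin.last d) - Real.pi / 2) x)
          + vnorm (fun p : Fin m × Fin m × Fin (d+1) => sff P φ x p.1 p.2.1 p.2.2)) := by
  intro j _
  classical
  have dAt : ∀ {g : (Fin m → ℝ) → ℝ}, ContDiff ℝ (⊤:ℕ∞) g →
      ∀ x, DifferentiableAt ℝ g x := fun hg x => hg.differentiable (by simp) x
  -- smoothness of everything
  have hΓNφ : ∀ α β γ, ContDiff ℝ (⊤:ℕ∞) (fun x => P.ΓN (φ x) α β γ) := by
    intro α β γ; simp only [hΓN]; exact smooth_sphereΓφ hgt hΓt hφ hchart α β γ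
  have hpdΓNφ : ∀ ω α β γ,
      ContDiff ℝ (⊤:ℕ∞) (fun x => pd ω (fun z => P.ΓN z α β γ) (φ x)) := by
    intro ω α β γ; simp only [hΓN]; exact smooth_pd_sphereΓφ hgt hΓt hφ hchart ω α β γ
  have hσ : ∀ α, ContDiff ℝ (⊤:ℕ∞) (fun x => uvar P φ j x α) :=
    smooth_uvar hPdom hφ hΓNφ hpdΓNφ j
  -- the controlled decomposition of A^n
  obtain ⟨G, H, hG, hH, he⟩ :=
    ctrl_Asec_last hΓN hgt hΓt hφ hchart hPdom hσ
  have hFeq : (fun z => Asec P φ (uvar P φ j) z (Fin.last d))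
      = fun x => Real.cos (φ x (Fin.last d)) * G x
        + ∑ i, pd i (fun w => φ w (Fin.last d)) x * H i x := funext he
  have hφl : ContDiff ℝ (⊤:ℕ∞) (fun x => φ x (Fin.last d)) := contDiff_proj_comp hφ _
  have hcos : ContDiff ℝ (⊤:ℕ∞) (fun x => Real.cos (φ x (Fin.last d))) :=
    Real.contDiff_cos.comp hφl
  -- the explicit derivative of the decomposition
  have hpdF : ∀ (i : Fin m) (x : Fin m → ℝ),
      pd i (fun z => Asec P φ (uvar P φ j) z (Fin.last d)) x
      = -Real.sin (φ x (Fin.last d)) * pd i (fun w => φ w (Fin.last d)) x * G x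
        + Real.cos (φ x (Fin.last d)) * pd i G x
        + ∑ l, (pd i (fun z => pd l (fun w => φ w (Fin.last d)) z) x * H l x
            + pd l (fun w => φ w (Fin.last d)) x * pd i (H l) x) := by
    intro i x
    rw [hFeq]
    rw [pd_add (dAt (hcos.mul hG) x)
      (dAt (ContDiff.sum fun l _ => (contDiff_pd hφl l).mul (hH l)) x) i]
    rw [pd_mul (dAt hcos x) (dAt hG x) i, pd_cos (dAt hφl x) i]
    rw [pd_sum (fun l _ => dAt ((contDiff_pd hφl l).mul (hH l)) x) i]
    rw [Finset.sum_congr rfl fun l _ =>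
      pd_mul (dAt (contDiff_pd hφl l) x) (dAt (hH l) x) i]
  -- the Hessian of φ^n via the second fundamental form
  obtain ⟨Gc, hGcsm, hGceq⟩ :
      ∃ Gc : Fin (d+1) → Fin (d+1) → (Fin m → ℝ) → ℝ,
        (∀ a b, ContDiff ℝ (⊤:ℕ∞) (Gc a b)) ∧ ∀ a b x,
          sphereΓ d gt Γt (φ x) (Fin.last d) a b
            = Real.cos (φ x (Fin.last d)) * Gc a b x := by
    have h := fun (a b : Fin (d+1)) => ΓN_last_fact (Γt := Γt) hgt hφ a b
    choose Gc hsm heq using h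
    exact ⟨Gc, hsm, heq⟩
  set W : Fin m → Fin m → (Fin m → ℝ) → ℝ :=
    fun i l x => ∑ β, ∑ γ, Gc β γ x * dphi φ x i β * dphi φ x l γ with hW_def
  have hWsm : ∀ i l, ContDiff ℝ (⊤:ℕ∞) (W i l) := by
    intro i l
    apply ContDiff.sum; intro β _; apply ContDiff.sum; intro γ _
    exact ((hGcsm β γ).mul (smooth_dphi hφ i β)).mul (smooth_dphi hφ l γ)
  have hHess : ∀ (i l : Fin m) (x : Fin m → ℝ),
      pd i (fun z => pd l (fun w => φ w (Fin.last d)) z) x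
      = sff P φ x i l (Fin.last d)
        + (∑ kk, P.ΓM x kk i l * pd kk (fun w => φ w (Fin.last d)) x)
        - Real.cos (φ x (Fin.last d)) * W i l x := by
    intro i l x
    have hs : sff P φ x i l (Fin.last d)
        = pd i (fun z => pd l (fun w => φ w (Fin.last d)) z) x
          - (∑ kk, P.ΓM x kk i l * pd kk (fun w => φ w (Fin.last d)) x)
          + ∑ β, ∑ γ, P.ΓN (φ x) (Fin.last d) β γ * dphi φ x i β * dphi φ x l γ := rfl
    have h2 : (∑ β, ∑ γ, P.ΓN (φ x) (Fin.last d) β γ * dphi φ x i β * dphi φ x l γ)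
        = Real.cos (φ x (Fin.last d)) * W i l x := by
      rw [hW_def]
      rw [Finset.mul_sum]
      apply Finset.sum_congr rfl; intro β _
      rw [Finset.mul_sum]
      apply Finset.sum_congr rfl; intro γ _
      rw [hΓN, hGceq]; ring
    rw [h2] at hs
    linarith [hs]
  -- master continuous bound on the compact set
  have hΦcont : Continuous (fun x => |G x| + (∑ i, |pd i G x|) + (∑ l, |H l x|)
      + (∑ i, ∑ l, |pd i (H l) x|) + (∑ kk, ∑ i, ∑ l, |P.ΓM x kk i l|)
      + (∑ i, ∑ l, |W i l x|)) := by
    have c1 : Continuous fun x => |G x| := hG.continuous.abs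
    have c2 : Continuous fun x => ∑ i, |pd i G x| :=
      continuous_finset_sum _ fun i _ => (contDiff_pd hG i).continuous.abs
    have c3 : Continuous fun x => ∑ l, |H l x| :=
      continuous_finset_sum _ fun l _ => (hH l).continuous.abs
    have c4 : Continuous fun x => ∑ i, ∑ l, |pd i (H l) x| :=
      continuous_finset_sum _ fun i _ =>
        continuous_finset_sum _ fun l _ => (contDiff_pd (hH l) i).continuous.abs
    have c5 : Continuous fun x => ∑ kk, ∑ i, ∑ l, |P.ΓM x kk i l| :=
      continuous_finset_sum _ fun kk _ => continuous_finset_sum _ fun i _ =>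
        continuous_finset_sum _ fun l _ => (hPdom.2 kk i l).continuous.abs
    have c6 : Continuous fun x => ∑ i, ∑ l, |W i l x| :=
      continuous_finset_sum _ fun i _ =>
        continuous_finset_sum _ fun l _ => (hWsm i l).continuous.abs
    exact ((((c1.add c2).add c3).add c4).add c5).add c6
  obtain ⟨c0, hc0⟩ := hDcpt.exists_bound_of_continuousOn hΦcont.continuousOn
  set c : ℝ := max c0 1 with hc_def
  have hc1 : (1:ℝ) ≤ c := le_max_right _ _
  have hcpos : (0:ℝ) < c := lt_of_lt_of_le one_pos hc1
  have hcnn : (0:ℝ) ≤ c := hcpos.le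
  have hmnn : (0:ℝ) ≤ (m:ℝ) := Nat.cast_nonneg m
  set K1 : ℝ := 1 + (m:ℝ)*c + c with hK1_def
  have hK1nn : 0 ≤ K1 := by
    have := mul_nonneg hmnn hcnn
    rw [hK1_def]; linarith
  set K0 : ℝ := c*2 + (m:ℝ)*(K1*c + c) with hK0_def
  have hK0nn : 0 ≤ K0 := by
    have h1 : 0 ≤ K1*c := mul_nonneg hK1nn hcnn
    have h2 : 0 ≤ (m:ℝ)*(K1*c + c) := mul_nonneg hmnn (by linarith)
    rw [hK0_def]; linarith
  refine ⟨(m:ℝ)*K0 + 1, by nlinarith [mul_nonneg hmnn hK0nn], ?_⟩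
  intro x hx
  have hxK : x ∈ closure D := subset_closure hx
  have hΦ : |G x| + (∑ i, |pd i G x|) + (∑ l, |H l x|)
      + (∑ i, ∑ l, |pd i (H l) x|) + (∑ kk, ∑ i, ∑ l, |P.ΓM x kk i l|)
      + (∑ i, ∑ l, |W i l x|) ≤ c := by
    have h := hc0 x hxK
    rw [Real.norm_eq_abs] at h
    exact le_trans (le_trans (le_abs_self _) h) (le_max_left _ _)
  have n1 : 0 ≤ |G x| := abs_nonneg _
  have n2 : 0 ≤ ∑ i, |pd i G x| := Finset.sum_nonneg fun _ _ => abs_nonneg _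
  have n3 : 0 ≤ ∑ l, |H l x| := Finset.sum_nonneg fun _ _ => abs_nonneg _
  have n4 : 0 ≤ ∑ i, ∑ l, |pd i (H l) x| :=
    Finset.sum_nonneg fun _ _ => Finset.sum_nonneg fun _ _ => abs_nonneg _
  have n5 : 0 ≤ ∑ kk, ∑ i, ∑ l, |P.ΓM x kk i l| :=
    Finset.sum_nonneg fun _ _ => Finset.sum_nonneg fun _ _ =>
      Finset.sum_nonneg fun _ _ => abs_nonneg _
  have n6 : 0 ≤ ∑ i, ∑ l, |W i l x| :=
    Finset.sum_nonneg fun _ _ => Finset.sum_nonneg fun _ _ => abs_nonneg _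
  have hGb : |G x| ≤ c := by linarith
  have hpdGb : ∀ i, |pd i G x| ≤ c := fun i => by
    have := abs_le_sum_abs (fun i => pd i G x) i; linarith
  have hHb : ∀ l, |H l x| ≤ c := fun l => by
    have := abs_le_sum_abs (fun l => H l x) l; linarith
  have hpdHb : ∀ i l, |pd i (H l) x| ≤ c := fun i l => by
    have := abs_le_sum_abs2 (fun i l => pd i (H l) x) i l; linarith
  have hΓMb : ∀ kk i l, |P.ΓM x kk i l| ≤ c := fun kk i l => by
    have := abs_le_sum_abs3 (fun kk i l => P.ΓM x kk i l) kk i l; linarith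
  have hWb : ∀ i l, |W i l x| ≤ c := fun i l => by
    have := abs_le_sum_abs2 (fun i l => W i l x) i l; linarith
  set R : ℝ := |φ x (Fin.last d) - Real.pi / 2|
      + vnorm (fun i : Fin m => pd i (fun w => φ w (Fin.last d) - Real.pi / 2) x)
      + vnorm (fun p : Fin m × Fin m × Fin (d+1) => sff P φ x p.1 p.2.1 p.2.2) with hR_def
  have hv1 : 0 ≤ vnorm (fun i : Fin m =>
      pd i (fun w => φ w (Fin.last d) - Real.pi / 2) x) := vnorm_nonneg _
  have hv2 : 0 ≤ vnorm (fun p : Fin m × Fin m × Fin (d+1) =>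
      sff P φ x p.1 p.2.1 p.2.2) := vnorm_nonneg _
  have habs0 : 0 ≤ |φ x (Fin.last d) - Real.pi / 2| := abs_nonneg _
  have hR0 : 0 ≤ R := by rw [hR_def]; linarith
  have hfR : |φ x (Fin.last d) - Real.pi / 2| ≤ R := by rw [hR_def]; linarith
  have hcosR : |Real.cos (φ x (Fin.last d))| ≤ R := by
    calc |Real.cos (φ x (Fin.last d))|
        = |Real.sin (φ x (Fin.last d) - Real.pi/2)| := by
          rw [show φ x (Fin.last d) - Real.pi/2
              = -(Real.pi/2 - φ x (Fin.last d)) by ring,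
            Real.sin_neg, Real.sin_pi_div_two_sub, abs_neg]
      _ ≤ |φ x (Fin.last d) - Real.pi/2| := Real.abs_sin_le_abs
      _ ≤ R := hfR
  have hdfR : ∀ i, |pd i (fun w => φ w (Fin.last d)) x| ≤ R := by
    intro i
    have h1 : pd i (fun w => φ w (Fin.last d) - Real.pi/2) x
        = pd i (fun w => φ w (Fin.last d)) x := pd_sub_const i _
    calc |pd i (fun w => φ w (Fin.last d)) x|
        = |pd i (fun w => φ w (Fin.last d) - Real.pi/2) x| := by rw [h1]
      _ ≤ vnorm (fun i => pd i (fun w => φ w (Fin.last d) - Real.pi/2) x) :=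
          abs_le_vnorm (fun i => pd i (fun w => φ w (Fin.last d) - Real.pi/2) x) i
      _ ≤ R := by rw [hR_def]; linarith
  have hsffR : ∀ i l, |sff P φ x i l (Fin.last d)| ≤ R := by
    intro i l
    have h2 : |sff P φ x i l (Fin.last d)|
        ≤ vnorm (fun p : Fin m × Fin m × Fin (d+1) => sff P φ x p.1 p.2.1 p.2.2) :=
      abs_le_vnorm (fun p : Fin m × Fin m × Fin (d+1) => sff P φ x p.1 p.2.1 p.2.2)
        (i, l, Fin.last d)
    rw [hR_def]; linarith
  have hsin1 : |Real.sin (φ x (Fin.last d))| ≤ 1 := Real.abs_sin_le_one _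
  have hHessb : ∀ i l,
      |pd i (fun z => pd l (fun w => φ w (Fin.last d)) z) x| ≤ K1 * R := by
    intro i l
    rw [hHess i l x]
    have t2 : |∑ kk, P.ΓM x kk i l * pd kk (fun w => φ w (Fin.last d)) x|
        ≤ (m:ℝ)*(c*R) := by
      calc |∑ kk, P.ΓM x kk i l * pd kk (fun w => φ w (Fin.last d)) x|
          ≤ ∑ kk, |P.ΓM x kk i l * pd kk (fun w => φ w (Fin.last d)) x| :=
            Finset.abs_sum_le_sum_abs _ _
        _ ≤ ∑ _kk : Fin m, c*R := Finset.sum_le_sum fun kk _ => by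
            rw [abs_mul]
            exact mul_le_mul (hΓMb kk i l) (hdfR kk) (abs_nonneg _) hcnn
        _ = (m:ℝ)*(c*R) := by
            rw [Finset.sum_const, Finset.card_univ, Fintype.card_fin, nsmul_eq_mul]
    have t3 : |Real.cos (φ x (Fin.last d)) * W i l x| ≤ R * c := by
      rw [abs_mul]
      exact mul_le_mul hcosR (hWb i l) (abs_nonneg _) hR0
    have t1 := hsffR i l
    calc |sff P φ x i l (Fin.last d)
          + (∑ kk, P.ΓM x kk i l * pd kk (fun w => φ w (Fin.last d)) x)
          - Real.cos (φ x (Fin.last d)) * W i l x|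
        ≤ |sff P φ x i l (Fin.last d)|
          + |∑ kk, P.ΓM x kk i l * pd kk (fun w => φ w (Fin.last d)) x|
          + |Real.cos (φ x (Fin.last d)) * W i l x| := by
          rw [sub_eq_add_neg]
          refine le_trans (abs_add_three _ _ _) ?_
          rw [abs_neg]
      _ ≤ R + (m:ℝ)*(c*R) + R*c := by linarith
      _ = K1 * R := by rw [hK1_def]; ring
  have keyi : ∀ i,
      |pd i (fun z => Asec P φ (uvar P φ j) z (Fin.last d)) x| ≤ K0 * R := by
    intro i
    rw [hpdF i x]
    have tA : |-Real.sin (φ x (Fin.last d)) * pd i (fun w => φ w (Fin.last d)) x * G x|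
        ≤ R * c := by
      rw [abs_mul, abs_mul, abs_neg]
      calc |Real.sin (φ x (Fin.last d))| * |pd i (fun w => φ w (Fin.last d)) x| * |G x|
          ≤ 1 * R * c := by
            apply mul_le_mul _ hGb (abs_nonneg _) (by linarith)
            exact mul_le_mul hsin1 (hdfR i) (abs_nonneg _) zero_le_one
        _ = R * c := by ring
    have tB : |Real.cos (φ x (Fin.last d)) * pd i G x| ≤ R * c := by
      rw [abs_mul]; exact mul_le_mul hcosR (hpdGb i) (abs_nonneg _) hR0
    have tC : |∑ l, (pd i (fun z => pd l (fun w => φ w (Fin.last d)) z) x * H l x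
          + pd l (fun w => φ w (Fin.last d)) x * pd i (H l) x)|
        ≤ (m:ℝ)*(K1*R*c + R*c) := by
      calc |∑ l, (pd i (fun z => pd l (fun w => φ w (Fin.last d)) z) x * H l x
            + pd l (fun w => φ w (Fin.last d)) x * pd i (H l) x)|
          ≤ ∑ l, |pd i (fun z => pd l (fun w => φ w (Fin.last d)) z) x * H l x
            + pd l (fun w => φ w (Fin.last d)) x * pd i (H l) x| :=
            Finset.abs_sum_le_sum_abs _ _
        _ ≤ ∑ _l : Fin m, (K1*R*c + R*c) := Finset.sum_le_sum fun l _ => by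
            refine le_trans (abs_add_le _ _) ?_
            rw [abs_mul, abs_mul]
            have u1 : |pd i (fun z => pd l (fun w => φ w (Fin.last d)) z) x| * |H l x|
                ≤ K1*R*c :=
              mul_le_mul (hHessb i l) (hHb l) (abs_nonneg _) (mul_nonneg hK1nn hR0)
            have u2 : |pd l (fun w => φ w (Fin.last d)) x| * |pd i (H l) x| ≤ R*c :=
              mul_le_mul (hdfR l) (hpdHb i l) (abs_nonneg _) hR0
            linarith
        _ = (m:ℝ)*(K1*R*c + R*c) := by
            rw [Finset.sum_const, Finset.card_univ, Fintype.card_fin, nsmul_eq_mul]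
    calc |-Real.sin (φ x (Fin.last d)) * pd i (fun w => φ w (Fin.last d)) x * G x
          + Real.cos (φ x (Fin.last d)) * pd i G x
          + ∑ l, (pd i (fun z => pd l (fun w => φ w (Fin.last d)) z) x * H l x
              + pd l (fun w => φ w (Fin.last d)) x * pd i (H l) x)|
        ≤ |-Real.sin (φ x (Fin.last d)) * pd i (fun w => φ w (Fin.last d)) x * G x|
          + |Real.cos (φ x (Fin.last d)) * pd i G x|
          + |∑ l, (pd i (fun z => pd l (fun w => φ w (Fin.last d)) z) x * H l x
              + pd l (fun w => φ w (Fin.last d)) x * pd i (H l) x)| :=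
          abs_add_three _ _ _
      _ ≤ R*c + R*c + (m:ℝ)*(K1*R*c + R*c) := by linarith
      _ = K0 * R := by rw [hK0_def]; ring
  calc vnorm (fun i : Fin m => pd i (fun z => Asec P φ (uvar P φ j) z (Fin.last d)) x)
      ≤ ∑ i, |pd i (fun z => Asec P φ (uvar P φ j) z (Fin.last d)) x| := vnorm_le_sum _
    _ ≤ ∑ _i : Fin m, K0 * R := Finset.sum_le_sum fun i _ => keyi i
    _ = (m:ℝ) * (K0 * R) := by
        rw [Finset.sum_const, Finset.card_univ, Fintype.card_fin, nsmul_eq_mul]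
    _ ≤ ((m:ℝ)*K0 + 1) * R := by nlinarith

end Polyharm
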